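/- Let X, Y, V, W be objects of A and g : V ⟶ W a morphism, viewed as an object of Arrow(A). Then for every n ∈ ℕ there is an isomorphism of abelian groups Ext^n_{Arrow(A)}(F(X, Y), g) ≅ Ext^n_A(X, V) × Ext^n_A(Y, W), where F(X, Y) is the object biprod.inl : X ⟶ X ⊞ Y of Arrow(A). -/

import Mathlib

open CategoryTheory Limits ZeroObject

universe w v u v' u'

section StatementAuxSection


namespace StatementAux

/-- Conjugating homs by isos is an additive equivalence. -/
@[simps!]
noncomputable def homCongrAdd {C : Type*} [Category C] [Preadditive C]
    {X X' Y Y' : C} (e : X ≅ X') (f : Y ≅ Y') : (X ⟶ Y) ≃+ (X' ⟶ Y') :=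
  { Iso.homCongr e f with
    map_add' := fun a b => by simp }

/-- The adjunction between induced functors on homological complexes. -/
noncomputable def mapHCAdj {C : Type u} [Category.{v} C] {D : Type u'} [Category.{v'} D]
    [Preadditive C] [Preadditive D]
    {F : C ⥤ D} {G : D ⥤ C} [F.Additive] [G.Additive] (adj : F ⊣ G)
    {ι : Type*} (c : ComplexShape ι) :
    F.mapHomologicalComplex c ⊣ G.mapHomologicalComplex c :=
  Adjunction.mkOfUnitCounit
    { unit :=
      { app := fun K =>
          { f := fun i => adj.unit.app (K.X i)
            comm' := fun i j _ => by exact (adj.unit.naturality (K.d i j)).symm }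
        naturality := fun K L φ => by
          ext i
          exact adj.unit.naturality (φ.f i) }
      counit :=
      { app := fun K =>
          { f := fun i => adj.counit.app (K.X i)
            comm' := fun i j _ => by exact (adj.counit.naturality (K.d i j)).symm }
        naturality := fun K L φ => by
          ext i
          exact adj.counit.naturality (φ.f i) }
      left_triangle := by
        ext K i
        simp
        exact adj.left_triangle_components (K.X i)
      right_triangle := by
        ext K i
        simp
        exact adj.right_triangle_components (K.X i) }

end StatementAux

namespace StatementAux

open DerivedCategory

variable {C : Type u} [Category.{v} C] {D : Type u'} [Category.{v'} D]
  [Abelian C] [Abelian D] [HasExt.{w} C] [HasExt.{w} D]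
  (F : C ⥤ D) (G : D ⥤ C)
  [F.Additive] [PreservesFiniteLimits F] [PreservesFiniteColimits F]
  [G.Additive] [PreservesFiniteLimits G] [PreservesFiniteColimits G]

/-- Ext adjunction isomorphism for a pair of exact adjoint functors. -/
noncomputable def extAdjEquiv (adj : F ⊣ G) (X : C) (Y : D) (n : ℕ) :
    Abelian.Ext (F.obj X) Y n ≃+ Abelian.Ext X (G.obj Y) n := by
  letI := HasDerivedCategory.standard C
  letI := HasDerivedCategory.standard D
  letI : CatCommSq (F.mapHomologicalComplex (ComplexShape.up ℤ)) Q Q F.mapDerivedCategory :=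
    ⟨F.mapDerivedCategoryFactors.symm⟩
  letI : CatCommSq (G.mapHomologicalComplex (ComplexShape.up ℤ)) Q Q G.mapDerivedCategory :=
    ⟨G.mapDerivedCategoryFactors.symm⟩
  have adj' : F.mapDerivedCategory ⊣ G.mapDerivedCategory :=
    (mapHCAdj adj (ComplexShape.up ℤ)).localization Q
      (HomologicalComplex.quasiIso C (ComplexShape.up ℤ)) Q
      (HomologicalComplex.quasiIso D (ComplexShape.up ℤ))
      F.mapDerivedCategory G.mapDerivedCategory
  -- single functor compatibility isos
  have ιF : (DerivedCategory.singleFunctor D 0).obj (F.obj X) ≅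
      F.mapDerivedCategory.obj ((DerivedCategory.singleFunctor C 0).obj X) :=
    ((SingleFunctors.evaluation _ _ (0 : ℤ)).mapIso
        (singleFunctorsPostcompQIso D)).app (F.obj X) ≪≫
      Q.mapIso ((HomologicalComplex.singleMapHomologicalComplex F (ComplexShape.up ℤ) 0).symm.app X) ≪≫
      F.mapDerivedCategoryFactors.symm.app _ ≪≫
      F.mapDerivedCategory.mapIso
        (((SingleFunctors.evaluation _ _ (0 : ℤ)).mapIso (singleFunctorsPostcompQIso C)).symm.app X)
  have ιG : G.mapDerivedCategory.obj ((DerivedCategory.singleFunctor D 0).obj Y) ≅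
      (DerivedCategory.singleFunctor C 0).obj (G.obj Y) :=
    G.mapDerivedCategory.mapIso
        (((SingleFunctors.evaluation _ _ (0 : ℤ)).mapIso (singleFunctorsPostcompQIso D)).app Y) ≪≫
      G.mapDerivedCategoryFactors.app _ ≪≫
      Q.mapIso ((HomologicalComplex.singleMapHomologicalComplex G (ComplexShape.up ℤ) 0).app Y) ≪≫
      ((SingleFunctors.evaluation _ _ (0 : ℤ)).mapIso (singleFunctorsPostcompQIso C)).symm.app (G.obj Y)
  refine Abelian.Ext.homAddEquiv.trans (AddEquiv.trans ?_ Abelian.Ext.homAddEquiv.symm)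
  refine (homCongrAdd ιF (Iso.refl _)).trans ?_
  refine AddEquiv.trans
    { toEquiv := adj'.homEquiv _ _
      map_add' := fun a b => by
        simp [Adjunction.homEquiv_unit, Functor.map_add] } ?_
  exact homCongrAdd (Iso.refl _)
    ((G.mapDerivedCategory.commShiftIso (n : ℤ)).app _ ≪≫
      (shiftFunctor _ (n : ℤ)).mapIso ιG)

end StatementAux


namespace StatementAux

variable (A : Type u) [Category.{v} A] [Abelian A]

/-- The functor `X ↦ (𝟙 X)`. -/
@[simps]
def idArr : A ⥤ Arrow A where
  obj X := Arrow.mk (𝟙 X)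
  map f := Arrow.homMk (u := f) (v := f) (by simp)

/-- The functor `Y ↦ (0 ⟶ Y)`. -/
@[simps]
noncomputable def botArr : A ⥤ Arrow A where
  obj Y := Arrow.mk (0 : (0 : A) ⟶ Y)
  map f := Arrow.homMk (u := 𝟙 0) (v := f) (by simp)

/-- The functor `X ↦ (X ⟶ 0)`. -/
@[simps]
noncomputable def topArr : A ⥤ Arrow A where
  obj X := Arrow.mk (0 : X ⟶ (0 : A))
  map f := Arrow.homMk (u := f) (v := 𝟙 0) (by simp)

noncomputable def adjIdLeft : idArr A ⊣ Arrow.leftFunc :=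
  Adjunction.mkOfHomEquiv
    { homEquiv := fun X g =>
        { toFun := fun φ => φ.left
          invFun := fun u => Arrow.homMk (u := u) (v := u ≫ g.hom) (by exact (Category.id_comp _).symm)
          left_inv := fun φ => by
            ext
            · rfl
            · exact φ.w.trans (Category.id_comp _)
          right_inv := fun u => rfl }
      homEquiv_naturality_left_symm := fun f u => by
        ext
        · rfl
        · exact Category.assoc _ _ _
      homEquiv_naturality_right := fun φ g => by rfl }

noncomputable def adjRightId : Arrow.rightFunc ⊣ idArr A :=
  Adjunction.mkOfHomEquiv
    { homEquiv := fun g X =>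
        { toFun := fun v => Arrow.homMk (u := g.hom ≫ v) (v := v) (by exact Category.comp_id _)
          invFun := fun φ => φ.right
          left_inv := fun v => rfl
          right_inv := fun φ => by
            ext
            · exact ((Category.comp_id _).symm.trans φ.w).symm
            · rfl }
      homEquiv_naturality_left_symm := fun f u => by rfl
      homEquiv_naturality_right := fun φ g => by
        ext
        · exact (Category.assoc _ _ _).symm
        · rfl }

noncomputable def adjBotRight : botArr A ⊣ Arrow.rightFunc :=
  Adjunction.mkOfHomEquiv
    { homEquiv := fun Y g =>
        { toFun := fun φ => φ.right
          invFun := fun v => Arrow.homMk (u := 0) (v := v)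
            (by apply (isZero_zero A).eq_of_src)
          left_inv := fun φ => by
            ext
            · apply (isZero_zero A).eq_of_src
            · rfl
          right_inv := fun v => rfl }
      homEquiv_naturality_left_symm := fun f u => by
        ext
        · apply (isZero_zero A).eq_of_src
        · rfl
      homEquiv_naturality_right := fun φ g => by rfl }

noncomputable def adjLeftTop : Arrow.leftFunc ⊣ topArr A :=
  Adjunction.mkOfHomEquiv
    { homEquiv := fun g X =>
        { toFun := fun u => Arrow.homMk (u := u) (v := 0)
            (by apply (isZero_zero A).eq_of_tgt)
          invFun := fun φ => φ.left
          left_inv := fun u => rfl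
          right_inv := fun φ => by
            ext
            · rfl
            · apply (isZero_zero A).eq_of_tgt }
      homEquiv_naturality_left_symm := fun f u => by rfl
      homEquiv_naturality_right := fun φ g => by
        ext
        · rfl
        · apply (isZero_zero A).eq_of_tgt }

variable {A}

/-- An object of `Arrow A` whose source and target are zero is a zero object. -/
lemma isZero_arrow {f : Arrow A} (h1 : IsZero f.left) (h2 : IsZero f.right) :
    IsZero f := by
  constructor
  · intro g
    refine ⟨⟨⟨Arrow.homMk (u := h1.to_ g.left) (v := h2.to_ g.right)
      (h1.eq_of_src _ _)⟩, fun φ => ?_⟩⟩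
    ext
    · apply h1.eq_of_src
    · apply h2.eq_of_src
  · intro g
    refine ⟨⟨⟨Arrow.homMk (u := h1.from_ g.left) (v := h2.from_ g.right)
      (h2.eq_of_tgt _ _)⟩, fun φ => ?_⟩⟩
    ext
    · apply h1.eq_of_tgt
    · apply h2.eq_of_tgt

end StatementAux

namespace StatementAux

open Abelian

variable {A : Type u} [Category.{v} A] [Abelian A] [HasExt.{w} A]

/-- Ext is invariant under isomorphism in the first variable. -/
noncomputable def extCongrFst {P P' Z : A} (e : P ≅ P') (n : ℕ) :
    Abelian.Ext P Z n ≃+ Abelian.Ext P' Z n where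
  toFun α := (Ext.mk₀ e.inv).comp α (zero_add n)
  invFun α := (Ext.mk₀ e.hom).comp α (zero_add n)
  left_inv α := by
    simp only [Ext.mk₀_comp_mk₀_assoc, Iso.hom_inv_id, Ext.mk₀_id_comp]
  right_inv α := by
    simp only [Ext.mk₀_comp_mk₀_assoc, Iso.inv_hom_id, Ext.mk₀_id_comp]
  map_add' α β := by simp only [Ext.comp_add]

/-- Ext is invariant under isomorphism in the second variable. -/
noncomputable def extCongrSnd {P Z Z' : A} (f : Z ≅ Z') (n : ℕ) :
    Abelian.Ext P Z n ≃+ Abelian.Ext P Z' n where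
  toFun α := α.comp (Ext.mk₀ f.hom) (add_zero n)
  invFun α := α.comp (Ext.mk₀ f.inv) (add_zero n)
  left_inv α := by
    simp only [Ext.comp_assoc_of_second_deg_zero, Ext.mk₀_comp_mk₀, Iso.hom_inv_id,
      Ext.comp_mk₀_id]
  right_inv α := by
    simp only [Ext.comp_assoc_of_second_deg_zero, Ext.mk₀_comp_mk₀, Iso.inv_hom_id,
      Ext.comp_mk₀_id]
  map_add' α β := by simp only [Ext.add_comp]

/-- Ext is invariant under isomorphisms in both variables. -/
noncomputable def extCongr {P P' Z Z' : A} (e : P ≅ P') (f : Z ≅ Z') (n : ℕ) :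
    Abelian.Ext P Z n ≃+ Abelian.Ext P' Z' n :=
  (extCongrFst e n).trans (extCongrSnd f n)

/-- Ext out of a binary biproduct decomposes. -/
noncomputable def extBiprodEquiv (P Q Z : A) (n : ℕ) :
    Abelian.Ext (P ⊞ Q) Z n ≃+ Abelian.Ext P Z n × Abelian.Ext Q Z n where
  toFun α := ((Ext.mk₀ biprod.inl).comp α (zero_add n),
    (Ext.mk₀ biprod.inr).comp α (zero_add n))
  invFun βγ := (Ext.mk₀ biprod.fst).comp βγ.1 (zero_add n) +
    (Ext.mk₀ biprod.snd).comp βγ.2 (zero_add n)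
  left_inv α := by
    apply Ext.biprod_ext
    · simp only [Ext.comp_add, Ext.mk₀_comp_mk₀_assoc, biprod.inl_fst_assoc,
        biprod.inl_snd_assoc, biprod.inr_fst_assoc, biprod.inr_snd_assoc,
        zero_comp, biprod.inl_fst, biprod.inl_snd, biprod.inr_fst, biprod.inr_snd,
        Ext.mk₀_id_comp, Ext.mk₀_zero, Ext.zero_comp, add_zero, zero_add]
    · simp only [Ext.comp_add, Ext.mk₀_comp_mk₀_assoc, biprod.inl_fst_assoc,
        biprod.inl_snd_assoc, biprod.inr_fst_assoc, biprod.inr_snd_assoc,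
        zero_comp, biprod.inl_fst, biprod.inl_snd, biprod.inr_fst, biprod.inr_snd,
        Ext.mk₀_id_comp, Ext.mk₀_zero, Ext.zero_comp, add_zero, zero_add]
  right_inv := fun (β, γ) => by
    refine Prod.ext ?_ ?_
    · show (Ext.mk₀ biprod.inl).comp _ (zero_add n) = β
      simp only [Ext.comp_add, Ext.mk₀_comp_mk₀_assoc, Ext.mk₀_comp_mk₀_assoc,
        biprod.inl_fst, biprod.inl_snd, Ext.mk₀_id_comp, Ext.mk₀_zero,
        Ext.zero_comp, add_zero]
    · show (Ext.mk₀ biprod.inr).comp _ (zero_add n) = γ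
      simp only [Ext.comp_add, Ext.mk₀_comp_mk₀_assoc, Ext.mk₀_comp_mk₀_assoc,
        biprod.inr_fst, biprod.inr_snd, Ext.mk₀_id_comp, Ext.mk₀_zero,
        Ext.zero_comp, zero_add]
  map_add' α β := by
    refine Prod.ext ?_ ?_ <;> simp [Ext.comp_add]

end StatementAux

namespace StatementAux

section

attribute [-instance] instPreadditiveArrow

variable (A : Type u) [Category.{v} A] [Abelian A] [Abelian (Arrow A)]

lemma isZero_idArr_zero : IsZero ((idArr A).obj 0) :=
  isZero_arrow (isZero_zero A) (isZero_zero A)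

lemma isZero_botArr_zero : IsZero ((botArr A).obj 0) :=
  isZero_arrow (isZero_zero A) (isZero_zero A)

noncomputable instance : (idArr A).PreservesZeroMorphisms :=
  Functor.preservesZeroMorphisms_of_map_zero_object (isZero_idArr_zero A).isoZero

noncomputable instance : (botArr A).PreservesZeroMorphisms :=
  Functor.preservesZeroMorphisms_of_map_zero_object (isZero_botArr_zero A).isoZero

noncomputable instance : (Arrow.leftFunc : Arrow A ⥤ A).PreservesZeroMorphisms :=
  Functor.preservesZeroMorphisms_of_map_zero_object
    (Arrow.leftFunc.mapIso ((isZero_zero (Arrow A)).iso (isZero_idArr_zero A)))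

noncomputable instance : (Arrow.rightFunc : Arrow A ⥤ A).PreservesZeroMorphisms :=
  Functor.preservesZeroMorphisms_of_map_zero_object
    (Arrow.rightFunc.mapIso ((isZero_zero (Arrow A)).iso (isZero_idArr_zero A)))

noncomputable instance : PreservesFiniteColimits (idArr A) :=
  letI : PreservesColimitsOfSize.{0,0} (idArr A) :=
    (adjIdLeft A).leftAdjoint_preservesColimits
  inferInstance

noncomputable instance : PreservesFiniteLimits (idArr A) :=
  letI : PreservesLimitsOfSize.{0,0} (idArr A) :=
    (adjRightId A).rightAdjoint_preservesLimits
  inferInstance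

noncomputable instance : PreservesFiniteLimits (Arrow.leftFunc : Arrow A ⥤ A) :=
  letI : PreservesLimitsOfSize.{0,0} (Arrow.leftFunc : Arrow A ⥤ A) :=
    (adjIdLeft A).rightAdjoint_preservesLimits
  inferInstance

noncomputable instance : PreservesFiniteColimits (Arrow.leftFunc : Arrow A ⥤ A) :=
  letI : PreservesColimitsOfSize.{0,0} (Arrow.leftFunc : Arrow A ⥤ A) :=
    (adjLeftTop A).leftAdjoint_preservesColimits
  inferInstance

noncomputable instance : PreservesFiniteLimits (Arrow.rightFunc : Arrow A ⥤ A) :=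
  letI : PreservesLimitsOfSize.{0,0} (Arrow.rightFunc : Arrow A ⥤ A) :=
    (adjBotRight A).rightAdjoint_preservesLimits
  inferInstance

noncomputable instance : PreservesFiniteColimits (Arrow.rightFunc : Arrow A ⥤ A) :=
  letI : PreservesColimitsOfSize.{0,0} (Arrow.rightFunc : Arrow A ⥤ A) :=
    (adjRightId A).leftAdjoint_preservesColimits
  inferInstance

noncomputable instance : PreservesFiniteColimits (botArr A) :=
  letI : PreservesColimitsOfSize.{0,0} (botArr A) :=
    (adjBotRight A).leftAdjoint_preservesColimits
  inferInstance

noncomputable instance : (idArr A).Additive :=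
  letI : PreservesColimitsOfSize.{0,0} (idArr A) :=
    (adjIdLeft A).leftAdjoint_preservesColimits
  letI := preservesBinaryBiproducts_of_preservesBinaryCoproducts (idArr A)
  Functor.additive_of_preservesBinaryBiproducts _

noncomputable instance : (botArr A).Additive :=
  letI : PreservesColimitsOfSize.{0,0} (botArr A) :=
    (adjBotRight A).leftAdjoint_preservesColimits
  letI := preservesBinaryBiproducts_of_preservesBinaryCoproducts (botArr A)
  Functor.additive_of_preservesBinaryBiproducts _

noncomputable instance : (Arrow.leftFunc : Arrow A ⥤ A).Additive :=
  letI : PreservesColimitsOfSize.{0,0} (Arrow.leftFunc : Arrow A ⥤ A) :=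
    (adjLeftTop A).leftAdjoint_preservesColimits
  letI := preservesBinaryBiproducts_of_preservesBinaryCoproducts
    (Arrow.leftFunc : Arrow A ⥤ A)
  Functor.additive_of_preservesBinaryBiproducts _

noncomputable instance : (Arrow.rightFunc : Arrow A ⥤ A).Additive :=
  letI : PreservesColimitsOfSize.{0,0} (Arrow.rightFunc : Arrow A ⥤ A) :=
    (adjRightId A).leftAdjoint_preservesColimits
  letI := preservesBinaryBiproducts_of_preservesBinaryCoproducts
    (Arrow.rightFunc : Arrow A ⥤ A)
  Functor.additive_of_preservesBinaryBiproducts _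

instance : (botArr A).PreservesMonomorphisms where
  preserves {X Y} f hf := by
    constructor
    intro Z a b h
    ext
    · exact (isZero_zero A).eq_of_tgt _ _
    · have hr : a.right ≫ f = b.right ≫ f := by
        exact congrArg CommaMorphism.right h
      exact (cancel_mono f).1 hr

noncomputable instance : PreservesFiniteLimits (botArr A) := by
  letI : PreservesColimitsOfSize.{0,0} (botArr A) :=
    (adjBotRight A).leftAdjoint_preservesColimits
  haveI : ∀ {X Y : A} (f : X ⟶ Y), PreservesColimit (parallelPair f 0) (botArr A) :=
    fun f => inferInstance
  haveI := (botArr A).preservesHomology_of_preservesMonos_and_cokernels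
  exact (botArr A).preservesFiniteLimits_of_preservesHomology

end

end StatementAux

namespace StatementAux

section

attribute [-instance] instPreadditiveArrow

variable (A : Type u) [Category.{v} A] [Abelian A] [Abelian (Arrow A)]

/-- The projection `Arrow.mk biprod.inl ⟶ idArr X`. -/
noncomputable def inlP₁ (X Y : A) :
    Arrow.mk (biprod.inl : X ⟶ X ⊞ Y) ⟶ (idArr A).obj X :=
  Arrow.homMk (u := 𝟙 X) (v := biprod.fst) (by exact (Category.id_comp _).trans biprod.inl_fst.symm)

/-- The projection `Arrow.mk biprod.inl ⟶ botArr Y`. -/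
noncomputable def inlP₂ (X Y : A) :
    Arrow.mk (biprod.inl : X ⟶ X ⊞ Y) ⟶ (botArr A).obj Y :=
  Arrow.homMk (u := 0) (v := biprod.snd) (by exact zero_comp.trans biprod.inl_snd.symm)

/-- `Arrow.mk biprod.inl` is a binary product of `idArr X` and `botArr Y`. -/
noncomputable def inlFanIsLimit (X Y : A) :
    IsLimit (BinaryFan.mk (inlP₁ A X Y) (inlP₂ A X Y)) :=
  BinaryFan.isLimitMk
    (fun s => Arrow.homMk (u := s.fst.left)
      (v := biprod.lift s.fst.right s.snd.right) (by
        apply biprod.hom_ext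
        · exact (Category.assoc _ _ _).trans
            ((congrArg (fun t => s.fst.left ≫ t) (biprod.inl_fst (X := X) (Y := Y))).trans
              (s.fst.w.trans ((congrArg (fun t => s.pt.hom ≫ t) (biprod.lift_fst _ _).symm).trans
                  (Category.assoc _ _ _).symm)))
        · exact (Category.assoc _ _ _).trans
            ((congrArg (fun t => s.fst.left ≫ t) (biprod.inl_snd (X := X) (Y := Y))).trans
              (comp_zero.trans ((comp_zero (f := s.snd.left)).symm.trans
                (s.snd.w.trans ((congrArg (fun t => s.pt.hom ≫ t) (biprod.lift_snd _ _).symm).trans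
                  (Category.assoc _ _ _).symm)))))))
    (fun s => by
      ext
      · exact Category.comp_id _
      · exact biprod.lift_fst _ _)
    (fun s => by
      ext
      · exact (isZero_zero A).eq_of_tgt _ _
      · exact biprod.lift_snd _ _)
    (fun s m h₁ h₂ => by
      ext
      · exact (Category.comp_id m.left).symm.trans (congrArg CommaMorphism.left h₁)
      · apply biprod.hom_ext
        · exact (congrArg CommaMorphism.right h₁).trans (biprod.lift_fst _ _).symm
        · exact (congrArg CommaMorphism.right h₂).trans (biprod.lift_snd _ _).symm)

/-- The object `Arrow.mk biprod.inl` is isomorphic to `idArr X ⊞ botArr Y`. -/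
noncomputable def inlBiprodIso (X Y : A) :
    Arrow.mk (biprod.inl : X ⟶ X ⊞ Y) ≅ (idArr A).obj X ⊞ (botArr A).obj Y :=
  (inlFanIsLimit A X Y).conePointUniqueUpToIso (BinaryBiproduct.isLimit _ _)

end

end StatementAux
end StatementAuxSection


variable (A : Type u) [Category.{v} A] [Abelian A]

/-- The functor `F : A × A ⥤ Arrow A` sending `(X, Y)` to the object
`biprod.inl : X ⟶ X ⊞ Y` of the arrow category. -/
@[simps]
noncomputable def ArrF : A × A ⥤ Arrow A where
  obj p := Arrow.mk (biprod.inl : p.1 ⟶ p.1 ⊞ p.2)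
  map {p q} φ := Arrow.homMk (u := φ.1) (v := biprod.map φ.1 φ.2) (by simp)

/-- The forgetful functor `G : Arrow A ⥤ A × A` sending an object `f : X ⟶ Y` of the
arrow category to the pair `(X, Y)`. -/
@[simps]
def ArrG : Arrow A ⥤ A × A where
  obj f := (f.left, f.right)
  map φ := (φ.left, φ.right)

variable {A}

/-- The counit morphism `ε_f : FG(f) ⟶ f`, whose domain component is `𝟙 X` and whose
codomain component is `biprod.desc f 𝟙 : X ⊞ Y ⟶ Y`. -/
noncomputable def arrCounit (f : Arrow A) : (ArrF A).obj ((ArrG A).obj f) ⟶ f :=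
  Arrow.homMk (u := 𝟙 f.left) (v := biprod.desc f.hom (𝟙 f.right))
    (by exact (Category.id_comp _).trans (biprod.inl_desc _ _).symm)

/-- for objects `X, Y, V, W` of `A` and a morphism `g : V ⟶ W` viewed as
an object of `Arrow A`, there is, for each `n : ℕ`, an isomorphism of abelian groups
`Ext^n_{Arrow A}(F(X, Y), g) ≅ Ext^n_A(X, V) × Ext^n_A(Y, W)`, where `F(X, Y)` is the
object `biprod.inl : X ⟶ X ⊞ Y` of `Arrow A`. -/
theorem statement15 [EnoughProjectives A] [HasExt.{w} A]
    [Abelian (Arrow A)] [HasExt.{w} (Arrow A)]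
    (X Y V W : A) (g : V ⟶ W) (n : ℕ) :
    Nonempty (Abelian.Ext ((ArrF A).obj (X, Y)) (Arrow.mk g) n ≃+
      (Abelian.Ext X V n × Abelian.Ext Y W n)) := by
  exact ⟨(StatementAux.extCongr (StatementAux.inlBiprodIso A X Y) (Iso.refl (Arrow.mk g)) n).trans
    ((StatementAux.extBiprodEquiv _ _ _ n).trans
      (AddEquiv.prodCongr
        (StatementAux.extAdjEquiv (StatementAux.idArr A) Arrow.leftFunc
          (StatementAux.adjIdLeft A) X (Arrow.mk g) n)
        (StatementAux.extAdjEquiv (StatementAux.botArr A) Arrow.rightFunc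
          (StatementAux.adjBotRight A) Y (Arrow.mk g) n)))⟩
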